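/- Let λ, μ, A, B, C be real numbers, let ξ¹, ξ², a¹, a², w ∈ ℝ³, and let 𝒢 = 𝒢_C be the symmetrized interaction symbol matrix (depending on the parameter C) and ξ = ξ¹ + ξ². If a¹·ξ¹ = 0, or a²·ξ² = 0, or w·ξ = 0, then the scalar w·(𝒢_C ξ) does not depend on C; precisely, w·(𝒢_C ξ) = w·(𝒢₀ ξ) where 𝒢₀ is the same matrix with C replaced by 0. (Since S waves have polarization orthogonal to their wave covector and P–P interactions only generate S-characteristic output directions, the principal symbols of all nonlinear responses generated by the interaction of two distorted plane waves are independent of the parameter C; this is the algebraic content of the proposition stating that C cannot be recovered from the leading term of the nonlinear response.) -/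
import Mathlib


/-- Euclidean dot product on ℝ³. -/
def dot (x y : Fin 3 → ℝ) : ℝ := ∑ i, x i * y i

/-- Symmetrized strain symbol matrix U of a wave with polarization a and covector ξ. -/
noncomputable def Umat (a ξ : Fin 3 → ℝ) : Matrix (Fin 3) (Fin 3) ℝ :=
  fun m n => (a m * ξ n + ξ m * a n) / 2

/-- The (unsymmetrized) interaction symbol matrix 𝔤(ξ¹, a¹; ξ², a²). -/
noncomputable def gfrak (lam mu A B C : ℝ) (ξ1 a1 ξ2 a2 : Fin 3 → ℝ) : Matrix (Fin 3) (Fin 3) ℝ :=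
  fun m n =>
    lam * dot a1 ξ1 * a2 m * ξ2 n
      + (lam / 2) * dot a1 a2 * dot ξ1 ξ2 * (if m = n then 1 else 0)
      + 2 * mu * (∑ j, Umat a1 ξ1 n j * (a2 m * ξ2 j))
      + mu * dot a1 a2 * ξ1 m * ξ2 n
      + A * (∑ j, Umat a1 ξ1 m j * Umat a2 ξ2 n j)
      + B * (2 * dot a1 ξ1 * Umat a2 ξ2 m n
          + (∑ i, ∑ j, Umat a1 ξ1 i j * Umat a2 ξ2 i j) * (if m = n then 1 else 0))
      + C * dot a1 ξ1 * dot a2 ξ2 * (if m = n then 1 else 0)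

/-- The symmetrized interaction symbol matrix 𝒢. -/
noncomputable def Gsym (lam mu A B C : ℝ) (ξ1 a1 ξ2 a2 : Fin 3 → ℝ) : Matrix (Fin 3) (Fin 3) ℝ :=
  gfrak lam mu A B C ξ1 a1 ξ2 a2 + gfrak lam mu A B C ξ2 a2 ξ1 a1

/-- If either polarization is orthogonal to its wave covector, or the output test
direction is orthogonal to ξ = ξ¹ + ξ², then the scalar w·(𝒢_C ξ) does not depend
on the parameter C. -/
theorem symbol_independent_of_C (lam mu A B C : ℝ) (ξ1 ξ2 a1 a2 w : Fin 3 → ℝ)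
    (h : dot a1 ξ1 = 0 ∨ dot a2 ξ2 = 0 ∨ dot w (ξ1 + ξ2) = 0) :
    dot w ((Gsym lam mu A B C ξ1 a1 ξ2 a2).mulVec (ξ1 + ξ2)) =
      dot w ((Gsym lam mu A B 0 ξ1 a1 ξ2 a2).mulVec (ξ1 + ξ2)) := by
  have hk : C * dot a1 ξ1 * dot a2 ξ2 * dot w (ξ1 + ξ2) = 0 := by
    rcases h with h | h | h <;> rw [h] <;> ring
  have key : ∀ m n, Gsym lam mu A B C ξ1 a1 ξ2 a2 m n
      = Gsym lam mu A B 0 ξ1 a1 ξ2 a2 m n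
        + 2 * (C * dot a1 ξ1 * dot a2 ξ2) * (if m = n then 1 else 0) := by
    intro m n
    simp only [Gsym, gfrak, Matrix.add_apply, Pi.add_apply]
    ring
  simp only [dot, Matrix.mulVec, dotProduct, Fin.sum_univ_three, Pi.add_apply,
    key] at hk ⊢
  norm_num [Fin.ext_iff]
  linear_combination 2 * hk
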